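/- arXiv:2210.03399 — 2 statements merged into one kernel-verified Lean document; each statement's English description precedes it below -/
import Mathlib

section
/- Let G be a split graph of order n that arises from the disjoint union of a clique C of order c and an independent set I of order n−c (with n−c ≥ 1) by adding m edges, each joining a vertex of C to a vertex of I. If 3c > n − 1 (i.e., c/n > 1/3 − 1/(3n)), then Mo(G) ≤ (1/8)·(n−c)·(n+c−1)². -/
set_option maxHeartbeats 1000000

open SimpleGraph Finset

set_option linter.unusedSectionVars false

/-- `nG G u v` is the number of vertices of `G` whose distance to `u` is strictly
smaller than their distance to `v` (vertices at infinite distance to both `u` and `v`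
are counted for neither, since the extended distance `⊤` is not `< ⊤`). -/
noncomputable def nG {V : Type*} [Fintype V] (G : SimpleGraph V) (u v : V) : ℕ :=
  Set.ncard {w : V | G.edist w u < G.edist w v}

section Aux
variable {V : Type*} [Fintype V] [DecidableEq V] {G : SimpleGraph V} [DecidableRel G.Adj]

private lemma two_le_edist {u v : V} (h1 : u ≠ v) (h2 : ¬G.Adj u v) :
    2 ≤ G.edist u v := by
  have h0 : G.edist u v ≠ 0 := by simp [SimpleGraph.edist_eq_zero_iff, h1]
  have h1' : G.edist u v ≠ 1 := by simp [SimpleGraph.edist_eq_one_iff_adj, h2]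
  have : 1 < G.edist u v := lt_of_le_of_ne (ENat.one_le_iff_ne_zero.mpr h0) (Ne.symm h1')
  exact one_add_one_eq_two.symm.trans_le (Order.add_one_le_of_lt this)

private lemma exists_adj_of_reachable {u v : V} (h : G.Reachable u v) :
    u = v ∨ ∃ x, G.Adj u x := by
  obtain ⟨p⟩ := h
  cases p with
  | nil => exact Or.inl rfl
  | cons h _ => exact Or.inr ⟨_, h⟩

variable {C : Finset V}
  (hclique : ∀ u ∈ C, ∀ v ∈ C, u ≠ v → G.Adj u v)
  (hindep : ∀ u ∉ C, ∀ v ∉ C, ¬ G.Adj u v)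

include hclique in
private lemma edist_C_le_one {w u : V} (hw : w ∈ C) (hu : u ∈ C) : G.edist w u ≤ 1 := by
  rcases eq_or_ne w u with rfl | hne
  · simp [SimpleGraph.edist_self]
  · exact le_of_eq (SimpleGraph.edist_eq_one_iff_adj.mpr (hclique w hw u hu hne))

include hclique hindep in
private lemma edist_C_le_two {w x u : V} (hw : w ∉ C) (hx : G.Adj w x) (hu : u ∈ C) :
    G.edist w u ≤ 2 := by
  have hxC : x ∈ C := by
    by_contra hxn
    exact hindep w hw x hxn hx
  calc G.edist w u ≤ G.edist w x + G.edist x u := SimpleGraph.edist_triangle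
    _ ≤ 1 + 1 := by
        gcongr
        · exact le_of_eq (SimpleGraph.edist_eq_one_iff_adj.mpr hx)
        · exact edist_C_le_one hclique hxC hu
    _ = 2 := by norm_num

include hclique hindep in
private lemma nG_cross_eq_one {u v : V} (hu : u ∈ C) (hv : v ∉ C) (hadj : G.Adj u v) :
    nG G v u = 1 := by
  have hset : {w : V | G.edist w v < G.edist w u} = {v} := by
    ext w
    simp only [Set.mem_setOf_eq, Set.mem_singleton_iff]
    constructor
    · intro hlt
      by_contra hne
      by_cases hwC : w ∈ C
      · have h1 : G.edist w u ≤ 1 := edist_C_le_one hclique hwC hu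
        have : G.edist w v < 1 := lt_of_lt_of_le hlt h1
        rw [ENat.lt_one_iff_eq_zero, SimpleGraph.edist_eq_zero_iff] at this
        exact hne this
      · have h2 : 2 ≤ G.edist w v := two_le_edist hne (hindep w hwC v hv)
        have hfin : G.edist w v ≠ ⊤ := fun h => not_top_lt (h ▸ hlt)
        rcases exists_adj_of_reachable (SimpleGraph.reachable_of_edist_ne_top hfin)
          with h | ⟨x, hx⟩
        · exact hne h
        · have h3 : G.edist w u ≤ 2 := edist_C_le_two hclique hindep hwC hx hu
          exact absurd (lt_of_lt_of_le hlt h3) (not_lt.mpr h2)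
    · rintro rfl
      rw [SimpleGraph.edist_self, SimpleGraph.edist_eq_one_iff_adj.mpr hadj.symm]
      exact zero_lt_one
  rw [nG, hset, Set.ncard_singleton]

private lemma one_le_nG {u v : V} (hadj : G.Adj u v) : 1 ≤ nG G u v := by
  have h : ({u} : Set V) ⊆ {w : V | G.edist w u < G.edist w v} := by
    rintro w rfl
    simp only [Set.mem_setOf_eq, SimpleGraph.edist_self,
      SimpleGraph.edist_eq_one_iff_adj.mpr hadj]
    exact zero_lt_one
  calc 1 = ({u} : Set V).ncard := (Set.ncard_singleton u).symm
    _ ≤ _ := Set.ncard_le_ncard h (Set.toFinite _)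

/-- For a cross edge `uv` (`u ∈ C`, `v ∉ C`), `nG G u v ≤ |V| - deg v`. -/
private lemma nG_cross_le {u v : V} (hu : u ∈ C) (hv : v ∉ C) (hadj : G.Adj u v) :
    nG G u v + G.degree v ≤ Fintype.card V := by
  classical
  set F : Finset V := insert v ((G.neighborFinset v).erase u) with hF
  have hcard : F.card = G.degree v := by
    rw [hF, Finset.card_insert_of_notMem (by simp), Finset.card_erase_of_mem (by
      simpa using hadj.symm), SimpleGraph.card_neighborFinset_eq_degree]
    have : 1 ≤ G.degree v := by
      rw [← SimpleGraph.card_neighborFinset_eq_degree]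
      exact Finset.card_pos.mpr ⟨u, by simpa using hadj.symm⟩
    omega
  have hsub : {w : V | G.edist w u < G.edist w v} ⊆ ↑(Fᶜ) := by
    intro w hw
    simp only [Set.mem_setOf_eq] at hw
    simp only [Finset.coe_compl, Set.mem_compl_iff, Finset.mem_coe, hF,
      Finset.mem_insert, Finset.mem_erase, SimpleGraph.mem_neighborFinset]
    rintro (rfl | ⟨hne, hadj'⟩)
    · rw [SimpleGraph.edist_self, SimpleGraph.edist_eq_one_iff_adj.mpr hadj.symm] at hw
      exact not_lt.mpr zero_le hw
    · rw [SimpleGraph.edist_eq_one_iff_adj.mpr hadj'.symm] at hw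
      rw [ENat.lt_one_iff_eq_zero, SimpleGraph.edist_eq_zero_iff] at hw
      exact hne hw
  have := Set.ncard_le_ncard hsub (Finset.finite_toSet _)
  rw [Set.ncard_coe_finset, Finset.card_compl] at this
  have hle : F.card ≤ Fintype.card V := Finset.card_le_univ F
  rw [nG]
  omega

include hclique hindep in
private lemma nG_clique_le {u v : V} (hu : u ∈ C) (hv : v ∈ C) (hne : u ≠ v) :
    nG G u v ≤ 1 + ((G.neighborFinset u \ C) \ (G.neighborFinset v \ C)).card := by
  classical
  have hsub : {w : V | G.edist w u < G.edist w v} ⊆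
      ↑(insert u ((G.neighborFinset u \ C) \ (G.neighborFinset v \ C))) := by
    intro w hw
    simp only [Set.mem_setOf_eq] at hw
    simp only [Finset.coe_insert, Set.mem_insert_iff, Finset.mem_coe, Finset.mem_sdiff,
      SimpleGraph.mem_neighborFinset]
    by_cases hwu : w = u
    · exact Or.inl hwu
    right
    by_cases hwC : w ∈ C
    · exfalso
      have h1 : G.edist w u = 1 :=
        SimpleGraph.edist_eq_one_iff_adj.mpr (hclique w hwC u hu hwu)
      rcases eq_or_ne w v with rfl | hwv
      · rw [SimpleGraph.edist_self] at hw
        exact not_lt.mpr zero_le hw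
      · rw [h1, SimpleGraph.edist_eq_one_iff_adj.mpr (hclique w hwC v hv hwv)] at hw
        exact lt_irrefl _ hw
    · by_cases hwv : G.Adj w v
      · exfalso
        rw [SimpleGraph.edist_eq_one_iff_adj.mpr hwv] at hw
        rw [ENat.lt_one_iff_eq_zero, SimpleGraph.edist_eq_zero_iff] at hw
        exact hwu hw
      by_cases hwu' : G.Adj w u
      · exact ⟨⟨hwu'.symm, hwC⟩, fun h => hwv h.1.symm⟩
      exfalso
      have h2 : 2 ≤ G.edist w u := two_le_edist hwu hwu'
      have hfin : G.edist w u ≠ ⊤ := (lt_of_lt_of_le hw le_top).ne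
      rcases exists_adj_of_reachable (SimpleGraph.reachable_of_edist_ne_top hfin)
        with h | ⟨x, hx⟩
      · exact hwu h
      · have h3 : G.edist w v ≤ 2 := edist_C_le_two hclique hindep hwC hx hv
        exact absurd (lt_of_le_of_lt h2 (lt_of_lt_of_le hw h3)) (lt_irrefl 2)
  calc nG G u v ≤ (insert u ((G.neighborFinset u \ C) \ (G.neighborFinset v \ C))).card := by
        have := Set.ncard_le_ncard hsub (Finset.finite_toSet _)
        rwa [Set.ncard_coe_finset] at this
    _ ≤ 1 + _ := by
        rw [add_comm]
        exact Finset.card_insert_le _ _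

include hclique hindep in
private lemma nG_clique_ge {u v : V} (hu : u ∈ C) (hv : v ∈ C) (hne : u ≠ v) :
    1 + ((G.neighborFinset v \ C) \ (G.neighborFinset u \ C)).card ≤ nG G v u := by
  classical
  have hvu : G.Adj v u := hclique v hv u hu hne.symm
  have hsub : ↑(insert v ((G.neighborFinset v \ C) \ (G.neighborFinset u \ C))) ⊆
      {w : V | G.edist w v < G.edist w u} := by
    intro w hw
    simp only [Finset.coe_insert, Set.mem_insert_iff, Finset.mem_coe, Finset.mem_sdiff,
      SimpleGraph.mem_neighborFinset] at hw
    simp only [Set.mem_setOf_eq]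
    rcases hw with rfl | ⟨⟨hadjv, hwC⟩, hnot⟩
    · rw [SimpleGraph.edist_self, SimpleGraph.edist_eq_one_iff_adj.mpr hvu]
      exact zero_lt_one
    · have hnadj : ¬G.Adj u w := fun h => hnot ⟨h, hwC⟩
      have h1 : G.edist w v = 1 := SimpleGraph.edist_eq_one_iff_adj.mpr hadjv.symm
      have h2 : 2 ≤ G.edist w u :=
        two_le_edist (fun h => hwC (h ▸ hu)) (fun h => hnadj h.symm)
      rw [h1]
      exact lt_of_lt_of_le (by norm_num) h2
  have hcard := Set.ncard_le_ncard hsub (Set.toFinite _)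
  rw [Set.ncard_coe_finset, Finset.card_insert_of_notMem (by
    simp only [Finset.mem_sdiff, SimpleGraph.mem_neighborFinset, not_and]
    rintro ⟨-, hvC⟩
    exact absurd hv hvC)] at hcard
  rw [nG]
  omega

include hclique hindep in
private lemma clique_key {u v : V} (hu : u ∈ C) (hv : v ∈ C) (hne : u ≠ v) :
    (nG G u v : ℤ) - nG G v u ≤
      ((G.neighborFinset u \ C).card : ℤ) - (G.neighborFinset v \ C).card := by
  classical
  have h1 := nG_clique_le hclique hindep hu hv hne
  have h2 := nG_clique_ge hclique hindep hu hv hne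
  have h3 := Finset.card_sdiff_add_card_inter (G.neighborFinset u \ C) (G.neighborFinset v \ C)
  have h4 := Finset.card_sdiff_add_card_inter (G.neighborFinset v \ C) (G.neighborFinset u \ C)
  rw [Finset.inter_comm] at h4
  omega

end Aux

private lemma abs_aux {x y s : ℝ} (hx0 : 0 ≤ x) (hy0 : 0 ≤ y) (hxs : x ≤ s) (hys : y ≤ s)
    (hs : 0 < s) :
    |x - y| ≤ x + y - 2 / s * x * y ∧ 0 ≤ x + y - 2 / s * x * y := by
  have h : 2 / s * x * y = 2 * x * y / s := by ring
  rw [abs_sub_le_iff, h]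
  have h2 : 2 * x * y / s ≤ 2 * y := by
    rw [div_le_iff₀ hs]
    nlinarith
  have h3 : 2 * x * y / s ≤ 2 * x := by
    rw [div_le_iff₀ hs]
    nlinarith
  exact ⟨⟨by linarith, by linarith⟩, by linarith⟩

/-- The Mostar index `Mo(G) = ∑_{uv ∈ E(G)} |nG(u,v) - nG(v,u)|` of a finite simple graph. -/
noncomputable def mostar {V : Type*} [Fintype V] (G : SimpleGraph V) : ℤ :=
  ∑ e ∈ (Set.toFinite G.edgeSet).toFinset,
    Sym2.lift ⟨fun u v => |(nG G u v : ℤ) - (nG G v u : ℤ)|, fun _ _ => abs_sub_comm _ _⟩ e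

/-- For a split graph of order `n` with clique of order `c`, independent set of order
`n - c ≥ 1` and `m` cross edges: if `3c > n - 1` then `Mo(G) ≤ (1/8)·(n-c)·(n+c-1)²`. -/
theorem mostar_split_le_large_clique {V : Type*} [Fintype V] [DecidableEq V] (G : SimpleGraph V)
    [DecidableRel G.Adj] (n c m : ℕ) (hn : Fintype.card V = n)
    (C : Finset V) (hC : C.card = c)
    (hclique : ∀ u ∈ C, ∀ v ∈ C, u ≠ v → G.Adj u v)
    (hindep : ∀ u ∉ C, ∀ v ∉ C, ¬ G.Adj u v)
    (hm : (G.edgeFinset.filter fun e => ∃ v ∈ e, v ∉ C).card = m)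
    (hcn : c < n) (h3c : (n : ℤ) - 1 < 3 * (c : ℤ)) :
    (mostar G : ℝ) ≤ (1 / 8 : ℝ) * ((n : ℝ) - (c : ℝ)) * ((n : ℝ) + (c : ℝ) - 1) ^ 2 := by
  classical
  letI : LinearOrder V := LinearOrder.lift' (Fintype.equivFin V) (Fintype.equivFin V).injective
  -- basic cardinalities
  set s : ℕ := Cᶜ.card with hsdef
  have hcardC : C.card ≤ Fintype.card V := Finset.card_le_univ C
  have hs : s = n - c := by rw [hsdef, Finset.card_compl, hn, hC]
  have hs1 : 1 ≤ s := by omega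
  have hsR : (s : ℝ) = (n : ℝ) - c := by
    rw [hs, Nat.cast_sub hcn.le]
  have hsR1 : (1 : ℝ) ≤ (s : ℝ) := by exact_mod_cast hs1
  -- the edge weight function
  set f : Sym2 V → ℤ :=
    (Sym2.lift ⟨fun u v => |(nG G u v : ℤ) - (nG G v u : ℤ)|, fun _ _ => abs_sub_comm _ _⟩)
    with hf
  set eI : V → ℕ := fun u => (G.neighborFinset u \ C).card with heI
  set XS : ℝ := ∑ u ∈ C, (eI u : ℝ) with hXS
  set T : ℝ := ∑ v ∈ Cᶜ, (G.degree v : ℝ) with hT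
  -- rewrite mostar as a sum over edgeFinset
  have hE : (Set.toFinite G.edgeSet).toFinset = G.edgeFinset := by
    ext e
    rw [Set.Finite.mem_toFinset, SimpleGraph.mem_edgeFinset]
  have hmostar : (mostar G : ℝ) = ∑ e ∈ G.edgeFinset, ((f e : ℤ) : ℝ) := by
    rw [mostar, hE]
    push_cast
    rfl
  -- split into clique edges and cross edges
  have hsplit : (mostar G : ℝ) =
      (∑ e ∈ G.edgeFinset.filter (fun e => ∃ v ∈ e, v ∉ C), ((f e : ℤ) : ℝ)) +
      (∑ e ∈ G.edgeFinset.filter (fun e => ¬∃ v ∈ e, v ∉ C), ((f e : ℤ) : ℝ)) := by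
    rw [hmostar, Finset.sum_filter_add_sum_filter_not]
  -- cross edges
  have hcross : (∑ e ∈ G.edgeFinset.filter (fun e => ∃ v ∈ e, v ∉ C), ((f e : ℤ) : ℝ)) ≤
      ∑ v ∈ Cᶜ, (G.degree v : ℝ) * ((n : ℝ) - 1 - G.degree v) := by
    have hXeq : G.edgeFinset.filter (fun e => ∃ v ∈ e, v ∉ C) =
        ((Cᶜ ×ˢ C).filter fun p => G.Adj p.1 p.2).image (fun p => s(p.1, p.2)) := by
      ext e
      simp only [Finset.mem_filter, SimpleGraph.mem_edgeFinset, Finset.mem_image,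
        Finset.mem_product, Finset.mem_compl]
      constructor
      · rintro ⟨he, v, hve, hvC⟩
        obtain ⟨u, rfl⟩ := Sym2.mem_iff_exists.mp hve
        have hadj : G.Adj v u := he
        have huC : u ∈ C := by
          by_contra h
          exact hindep v hvC u h hadj
        exact ⟨(v, u), ⟨⟨hvC, huC⟩, hadj⟩, rfl⟩
      · rintro ⟨⟨v, u⟩, ⟨⟨hvC, huC⟩, hadj⟩, rfl⟩
        exact ⟨hadj, v, Sym2.mem_mk_left _ _, hvC⟩
    rw [hXeq, Finset.sum_image ?inj]
    case inj =>
      rintro ⟨a, b⟩ ha ⟨a', b'⟩ ha' h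
      simp only [Finset.mem_coe, Finset.mem_filter, Finset.mem_product, Finset.mem_compl] at ha ha'
      rcases Sym2.eq_iff.mp h with ⟨rfl, rfl⟩ | ⟨rfl, rfl⟩
      · rfl
      · exact absurd ha'.1.2 ha.1.1
    calc ∑ p ∈ (Cᶜ ×ˢ C).filter (fun p => G.Adj p.1 p.2), ((f s(p.1, p.2) : ℤ) : ℝ)
        ≤ ∑ p ∈ (Cᶜ ×ˢ C).filter (fun p => G.Adj p.1 p.2), ((n : ℝ) - 1 - G.degree p.1) := by
          apply Finset.sum_le_sum
          rintro ⟨v, u⟩ hp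
          simp only [Finset.mem_filter, Finset.mem_product, Finset.mem_compl] at hp
          obtain ⟨⟨hvC, huC⟩, hadj⟩ := hp
          have hfval : f s(v, u) = |(nG G v u : ℤ) - nG G u v| := by
            rw [hf, Sym2.lift_mk]
          have h1 : nG G v u = 1 := nG_cross_eq_one hclique hindep huC hvC hadj.symm
          have h2 : 1 ≤ nG G u v := one_le_nG hadj.symm
          have h3 : nG G u v + G.degree v ≤ Fintype.card V := nG_cross_le huC hvC hadj.symm
          rw [hn] at h3
          have hZ : f s(v, u) ≤ (n : ℤ) - 1 - G.degree v := by
            rw [hfval, h1]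
            rw [abs_sub_comm, abs_of_nonneg (by push_cast; omega)]
            push_cast
            omega
          calc ((f s(v, u) : ℤ) : ℝ) ≤ (((n : ℤ) - 1 - G.degree v : ℤ) : ℝ) := by
                exact_mod_cast hZ
            _ = (n : ℝ) - 1 - G.degree v := by push_cast; ring
      _ = ∑ v ∈ Cᶜ, (G.degree v : ℝ) * ((n : ℝ) - 1 - G.degree v) := by
          rw [Finset.sum_filter, Finset.sum_product]
          refine Finset.sum_congr rfl fun v hv => ?_
          rw [← Finset.sum_filter]
          show ∑ _a ∈ C.filter (fun a => G.Adj v a), ((n : ℝ) - 1 - (G.degree v : ℝ)) = _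
          rw [Finset.sum_const]
          have hdeg : (C.filter (fun u => G.Adj v u)).card = G.degree v := by
            rw [← SimpleGraph.card_neighborFinset_eq_degree]
            congr 1
            ext u
            simp only [Finset.mem_filter, SimpleGraph.mem_neighborFinset]
            constructor
            · exact fun h => h.2
            · intro h
              refine ⟨?_, h⟩
              by_contra huC
              exact hindep v (Finset.mem_compl.mp hv) u huC h
          rw [hdeg, nsmul_eq_mul]
  -- clique edges
  have hclq : (∑ e ∈ G.edgeFinset.filter (fun e => ¬∃ v ∈ e, v ∉ C), ((f e : ℤ) : ℝ)) ≤
      (c : ℝ) * XS - XS ^ 2 / s := by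
    have hspos : (0 : ℝ) < s := by linarith
    have heIle : ∀ u : V, (eI u : ℝ) ≤ s := by
      intro u
      have hsub : (G.neighborFinset u \ C) ⊆ Cᶜ := by
        intro b hb
        simp only [Finset.mem_sdiff] at hb
        exact Finset.mem_compl.mpr hb.2
      exact_mod_cast Finset.card_le_card hsub
    set gR : V × V → ℝ := fun p => (eI p.1 : ℝ) + eI p.2 - 2 / s * eI p.1 * eI p.2 with hgR
    have haux : ∀ a b : V, |(eI a : ℝ) - eI b| ≤ gR (a, b) ∧ 0 ≤ gR (a, b) := fun a b =>
      abs_aux (Nat.cast_nonneg _) (Nat.cast_nonneg _) (heIle a) (heIle b) hspos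
    -- rewrite the clique edge sum as a sum over ordered pairs
    have hKeq : G.edgeFinset.filter (fun e => ¬∃ v ∈ e, v ∉ C) =
        ((C ×ˢ C).filter fun p => G.Adj p.1 p.2 ∧ p.1 < p.2).image (fun p => s(p.1, p.2)) := by
      ext e
      induction e using Sym2.ind with
      | _ a b =>
        constructor
        · intro h
          rw [Finset.mem_filter] at h
          obtain ⟨he, hnot⟩ := h
          have hadj : G.Adj a b := SimpleGraph.mem_edgeFinset.mp he
          have haC : a ∈ C := by
            by_contra hh
            exact hnot ⟨a, Sym2.mem_mk_left _ _, hh⟩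
          have hbC : b ∈ C := by
            by_contra hh
            exact hnot ⟨b, Sym2.mem_mk_right _ _, hh⟩
          rw [Finset.mem_image]
          rcases lt_or_gt_of_ne hadj.ne with hlt | hgt
          · exact ⟨(a, b), Finset.mem_filter.mpr
              ⟨Finset.mem_product.mpr ⟨haC, hbC⟩, hadj, hlt⟩, rfl⟩
          · exact ⟨(b, a), Finset.mem_filter.mpr
              ⟨Finset.mem_product.mpr ⟨hbC, haC⟩, hadj.symm, hgt⟩, Sym2.eq_swap⟩
        · intro h
          rw [Finset.mem_image] at h
          obtain ⟨⟨x, y⟩, hmem, heq⟩ := h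
          rw [Finset.mem_filter, Finset.mem_product] at hmem
          obtain ⟨⟨hxC, hyC⟩, hadj, -⟩ := hmem
          rw [Finset.mem_filter]
          constructor
          · rw [← heq]
            exact SimpleGraph.mem_edgeFinset.mpr hadj
          · rintro ⟨v, hv, hvC⟩
            rw [← heq] at hv
            rcases Sym2.mem_iff.mp hv with rfl | rfl
            · exact hvC hxC
            · exact hvC hyC
    rw [hKeq, Finset.sum_image ?inj2]
    case inj2 =>
      rintro ⟨a, b⟩ ha ⟨a', b'⟩ ha' h
      simp only [Finset.mem_coe, Finset.mem_filter, Finset.mem_product] at ha ha'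
      rcases Sym2.eq_iff.mp h with ⟨rfl, rfl⟩ | ⟨rfl, rfl⟩
      · rfl
      · exact absurd (ha.2.2.trans ha'.2.2) (lt_irrefl _)
    -- per-edge bound
    have hPle : ∀ p ∈ (C ×ˢ C).filter (fun p => G.Adj p.1 p.2 ∧ p.1 < p.2),
        ((f s(p.1, p.2) : ℤ) : ℝ) ≤ gR p := by
      rintro ⟨u, v⟩ hp
      simp only [Finset.mem_filter, Finset.mem_product] at hp
      obtain ⟨⟨huC, hvC⟩, hadj, hlt⟩ := hp
      have hne : u ≠ v := hadj.ne
      have h1 := clique_key hclique hindep huC hvC hne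
      have h2 := clique_key hclique hindep hvC huC hne.symm
      have hfval : f s(u, v) = |(nG G u v : ℤ) - nG G v u| := by
        rw [hf, Sym2.lift_mk]
      have heIu : ((G.neighborFinset u \ C).card : ℤ) = (eI u : ℤ) := rfl
      have heIv : ((G.neighborFinset v \ C).card : ℤ) = (eI v : ℤ) := rfl
      rw [heIu, heIv] at h1 h2
      have habs : f s(u, v) ≤ |(eI u : ℤ) - eI v| := by
        rw [hfval, abs_sub_le_iff]
        refine ⟨h1.trans (le_abs_self _), h2.trans ?_⟩
        rw [abs_sub_comm]
        exact le_abs_self _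
      have hcast : ((f s(u, v) : ℤ) : ℝ) ≤ |(eI u : ℝ) - eI v| := by
        calc ((f s(u, v) : ℤ) : ℝ) ≤ ((|(eI u : ℤ) - eI v| : ℤ) : ℝ) := by exact_mod_cast habs
          _ = |(eI u : ℝ) - eI v| := by push_cast; ring
      exact hcast.trans (haux u v).1
    -- drop to the full ordered-pair set
    calc ∑ p ∈ (C ×ˢ C).filter (fun p => G.Adj p.1 p.2 ∧ p.1 < p.2), ((f s(p.1, p.2) : ℤ) : ℝ)
        ≤ ∑ p ∈ (C ×ˢ C).filter (fun p => G.Adj p.1 p.2 ∧ p.1 < p.2), gR p :=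
          Finset.sum_le_sum hPle
      _ ≤ ∑ p ∈ (C ×ˢ C).filter (fun p => p.1 < p.2), gR p := by
          apply Finset.sum_le_sum_of_subset_of_nonneg
          · intro p hp
            simp only [Finset.mem_filter] at hp ⊢
            exact ⟨hp.1, hp.2.2⟩
          · exact fun p _ _ => (haux p.1 p.2).2
      _ ≤ (c : ℝ) * XS - XS ^ 2 / s := by
          have hswap : ∑ p ∈ (C ×ˢ C).filter (fun p => p.1 < p.2), gR p =
              ∑ p ∈ (C ×ˢ C).filter (fun p => p.2 < p.1), gR p := by
            refine Finset.sum_nbij' (i := Prod.swap) (j := Prod.swap) ?_ ?_ ?_ ?_ ?_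
            · rintro ⟨a, b⟩ h
              simp only [Finset.mem_filter, Finset.mem_product, Prod.swap] at h ⊢
              exact ⟨⟨h.1.2, h.1.1⟩, h.2⟩
            · rintro ⟨a, b⟩ h
              simp only [Finset.mem_filter, Finset.mem_product, Prod.swap] at h ⊢
              exact ⟨⟨h.1.2, h.1.1⟩, h.2⟩
            · intro a _
              exact Prod.swap_swap a
            · intro a _
              exact Prod.swap_swap a
            · rintro ⟨a, b⟩ _
              simp only [hgR, Prod.swap]
              ring
          have hgt_eq : ((C ×ˢ C).filter (fun p => ¬p.1 < p.2)).filter (fun p => p.2 < p.1) =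
              (C ×ˢ C).filter (fun p => p.2 < p.1) := by
            ext ⟨a, b⟩
            simp only [Finset.mem_filter, Finset.mem_product]
            constructor
            · rintro ⟨⟨hab, -⟩, h⟩
              exact ⟨hab, h⟩
            · rintro ⟨hab, h⟩
              exact ⟨⟨hab, asymm h⟩, h⟩
          have hdiag_eq : ((C ×ˢ C).filter (fun p => ¬p.1 < p.2)).filter (fun p => ¬p.2 < p.1) =
              C.image (fun u => (u, u)) := by
            ext ⟨a, b⟩
            simp only [Finset.mem_filter, Finset.mem_product, Finset.mem_image, not_lt]
            constructor
            · rintro ⟨⟨⟨haC, hbC⟩, h1⟩, h2⟩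
              exact ⟨a, haC, by rw [le_antisymm h2 h1]⟩
            · rintro ⟨u, huC, heq⟩
              injection heq with ha hb
              subst ha; subst hb
              exact ⟨⟨⟨huC, huC⟩, le_refl _⟩, le_refl _⟩
          have hdiag_sum : ∑ p ∈ ((C ×ˢ C).filter (fun p => ¬p.1 < p.2)).filter
              (fun p => ¬p.2 < p.1), gR p = ∑ u ∈ C, gR (u, u) := by
            rw [hdiag_eq]
            rw [Finset.sum_image]
            intro x _ y _ h
            exact (Prod.mk.injEq _ _ _ _ ▸ h).1
          have hdiag_nn : 0 ≤ ∑ u ∈ C, gR (u, u) :=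
            Finset.sum_nonneg fun u _ => (haux u u).2
          have hpart : ∑ p ∈ C ×ˢ C, gR p =
              ∑ p ∈ (C ×ˢ C).filter (fun p => p.1 < p.2), gR p +
              (∑ p ∈ (C ×ˢ C).filter (fun p => p.2 < p.1), gR p + ∑ u ∈ C, gR (u, u)) := by
            rw [← Finset.sum_filter_add_sum_filter_not (C ×ˢ C) (fun p => p.1 < p.2) gR]
            congr 1
            rw [← Finset.sum_filter_add_sum_filter_not
              ((C ×ˢ C).filter (fun p => ¬p.1 < p.2)) (fun p => p.2 < p.1) gR,
              hgt_eq, hdiag_sum]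
          have hprod : ∑ p ∈ C ×ˢ C, gR p = 2 * (c : ℝ) * XS - 2 / s * XS ^ 2 := by
            rw [Finset.sum_product]
            have hinner : ∀ u ∈ C, ∑ v ∈ C, gR (u, v) =
                (c : ℝ) * eI u + XS - 2 / s * eI u * XS := by
              intro u _
              have : ∀ v ∈ C, gR (u, v) = ((eI u : ℝ) + eI v) - 2 / s * eI u * eI v :=
                fun v _ => rfl
              rw [Finset.sum_congr rfl this, Finset.sum_sub_distrib, Finset.sum_add_distrib,
                Finset.sum_const]
              have h1 : ∑ v ∈ C, 2 / (s : ℝ) * eI u * eI v = 2 / s * eI u * XS := by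
                rw [hXS, Finset.mul_sum]
              rw [h1, hXS, hC, nsmul_eq_mul]
            rw [Finset.sum_congr rfl hinner, Finset.sum_sub_distrib, Finset.sum_add_distrib,
              Finset.sum_const]
            have h2 : ∑ u ∈ C, (c : ℝ) * eI u = (c : ℝ) * XS := by
              rw [hXS, Finset.mul_sum]
            have h3 : ∑ u ∈ C, 2 / (s : ℝ) * eI u * XS =
                (∑ u ∈ C, 2 / (s : ℝ) * eI u) * XS := by
              rw [Finset.sum_mul]
            have h4 : ∑ u ∈ C, 2 / (s : ℝ) * eI u = 2 / s * XS := by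
              rw [hXS, Finset.mul_sum]
            rw [h2, h3, h4, hC, nsmul_eq_mul]
            ring
          have : 2 * ∑ p ∈ (C ×ˢ C).filter (fun p => p.1 < p.2), gR p ≤
              2 * (c : ℝ) * XS - 2 / s * XS ^ 2 := by
            rw [← hprod, hpart, ← hswap]
            linarith [hdiag_nn]
          have hXs2 : 2 / (s : ℝ) * XS ^ 2 = 2 * (XS ^ 2 / s) := by
            field_simp
          linarith [this, hXs2.le, hXs2.ge]
  -- cross sum estimate
  have hcross2 : ∑ v ∈ Cᶜ, (G.degree v : ℝ) * ((n : ℝ) - 1 - G.degree v) ≤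
      ((n : ℝ) - 1) * T - T ^ 2 / s := by
    have hcs : T ^ 2 ≤ (s : ℝ) * ∑ v ∈ Cᶜ, (G.degree v : ℝ) ^ 2 := by
      simpa [hT, hsdef] using
        sq_sum_le_card_mul_sum_sq (s := Cᶜ) (f := fun v => (G.degree v : ℝ))
    have hexp : ∑ v ∈ Cᶜ, (G.degree v : ℝ) * ((n : ℝ) - 1 - G.degree v) =
        ((n : ℝ) - 1) * T - ∑ v ∈ Cᶜ, (G.degree v : ℝ) ^ 2 := by
      rw [hT, Finset.mul_sum, ← Finset.sum_sub_distrib]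
      exact Finset.sum_congr rfl fun v _ => by ring
    rw [hexp]
    have hspos : (0 : ℝ) < s := by linarith
    have hdiv : T ^ 2 / s ≤ ∑ v ∈ Cᶜ, (G.degree v : ℝ) ^ 2 :=
      (div_le_iff₀ hspos).mpr (by nlinarith [hcs])
    linarith
  -- double counting: XS = T
  have hXT : XS = T := by
    have hnat : ∑ u ∈ C, eI u = ∑ v ∈ Cᶜ, G.degree v := by
      have h1 : ∀ u : V, eI u = (Cᶜ.filter (G.Adj u)).card := by
        intro u
        show (G.neighborFinset u \ C).card = _
        congr 1
        ext b
        simp only [Finset.mem_sdiff, SimpleGraph.mem_neighborFinset, Finset.mem_filter,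
          Finset.mem_compl]
        tauto
      have h2 : ∀ v ∈ Cᶜ, G.degree v = (C.filter (G.Adj v)).card := by
        intro v hv
        rw [← SimpleGraph.card_neighborFinset_eq_degree]
        congr 1
        ext u
        simp only [SimpleGraph.mem_neighborFinset, Finset.mem_filter]
        exact ⟨fun h => ⟨by

          by_contra huC
          exact hindep v (Finset.mem_compl.mp hv) u huC h, h⟩, fun h => h.2⟩
      rw [Finset.sum_congr rfl (fun u _ => h1 u), Finset.sum_congr rfl h2]
      simp only [Finset.card_filter]
      rw [Finset.sum_comm]
      refine Finset.sum_congr rfl fun v _ => Finset.sum_congr rfl fun u _ => ?_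
      simp only [G.adj_comm u v]
    rw [hXS, hT]
    exact_mod_cast congrArg (Nat.cast : ℕ → ℝ) hnat
  -- finish
  have hXSnn : 0 ≤ XS := Finset.sum_nonneg fun u _ => Nat.cast_nonneg _
  rw [hsplit]
  have hq : (0:ℝ) ≤ (n : ℝ) + c - 1 := by
    have h1 : (1:ℝ) ≤ n := by exact_mod_cast Nat.one_le_iff_ne_zero.mpr (by omega)
    have h2 : (0:ℝ) ≤ c := Nat.cast_nonneg _
    linarith
  have hfinal : (c : ℝ) * XS - XS ^ 2 / s + (((n : ℝ) - 1) * XS - XS ^ 2 / s) ≤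
      (1 / 8 : ℝ) * ((n : ℝ) - (c : ℝ)) * ((n : ℝ) + (c : ℝ) - 1) ^ 2 := by
    have hspos : (0 : ℝ) < s := by linarith
    rw [← hsR]
    have hP : XS ^ 2 / s * s = XS ^ 2 := div_mul_cancel₀ _ (ne_of_gt hspos)
    nlinarith [sq_nonneg ((s : ℝ) * ((n : ℝ) + c - 1) - 4 * XS), hspos, hP,
      mul_pos hspos hspos]
  rw [hXT] at hclq hfinal
  linarith [hcross, hclq, hcross2, hfinal]
end

section
/- If G is a split graph of order n that arises from the disjoint union of a clique C of order c and an independent set I of order n−c by adding edges, each joining a vertex of C to a vertex of I, then Mo(G) ≤ (4/27)·n³. -/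
open Finset SimpleGraph
set_option linter.unusedSectionVars false
set_option maxHeartbeats 4000000

section aux
variable {V : Type*} [Fintype V] [DecidableEq V] {G : SimpleGraph V} [DecidableRel G.Adj]
  {C : Finset V}

lemma my_two_le_edist {w z : V} (hne : w ≠ z) (hadj : ¬ G.Adj w z) : 2 ≤ G.edist w z := by
  rcases eq_or_ne (G.edist w z) ⊤ with h | h
  · simp [h]
  · lift G.edist w z to ℕ using h with k hk
    have h0 : k ≠ 0 := by
      intro h; apply hne; rw [← SimpleGraph.edist_eq_zero_iff (G := G), ← hk, h]; rfl
    have h1 : k ≠ 1 := by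
      intro h; apply hadj; rw [← SimpleGraph.edist_eq_one_iff_adj (G := G), ← hk, h]; rfl
    have : 2 ≤ k := by omega
    exact_mod_cast this

lemma my_exists_adj {w z : V} (hne : w ≠ z) (h : G.edist w z ≠ ⊤) : ∃ x, G.Adj w x := by
  obtain ⟨p, -⟩ := SimpleGraph.exists_walk_of_edist_ne_top h
  cases p with
  | nil => exact absurd rfl hne
  | cons h _ => exact ⟨_, h⟩

lemma my_edist_le_two (hclique : ∀ u ∈ C, ∀ v ∈ C, u ≠ v → G.Adj u v) {w x y : V} (hx : x ∈ C) (hy : y ∈ C) (hadj : G.Adj w x) :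
    G.edist w y ≤ 2 := by
  rcases eq_or_ne x y with rfl | hne
  · exact le_trans (le_of_eq (SimpleGraph.edist_eq_one_iff_adj.mpr hadj)) (by norm_num)
  · calc G.edist w y ≤ G.edist w x + G.edist x y := SimpleGraph.edist_triangle
    _ ≤ 1 + 1 := add_le_add (le_of_eq (SimpleGraph.edist_eq_one_iff_adj.mpr hadj))
          (le_of_eq (SimpleGraph.edist_eq_one_iff_adj.mpr (hclique x hx y hy hne)))
    _ = 2 := by norm_num

lemma clique_set (hclique : ∀ u ∈ C, ∀ v ∈ C, u ≠ v → G.Adj u v)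
    (hindep : ∀ u ∉ C, ∀ v ∉ C, ¬ G.Adj u v) {u v : V} (hu : u ∈ C) (hv : v ∈ C) (huv : u ≠ v) :
    {w : V | G.edist w u < G.edist w v} =
      ↑(insert u ((univ.filter fun w => G.Adj u w ∧ w ∉ C) \
        (univ.filter fun w => G.Adj v w ∧ w ∉ C))) := by
  ext w
  simp only [Set.mem_setOf_eq, coe_insert, Set.mem_insert_iff, coe_sdiff, Set.mem_diff,
    coe_filter, Set.mem_setOf_eq, mem_univ, true_and]
  constructor
  · intro h
    by_cases hwC : w ∈ C
    · rcases eq_or_ne w u with rfl | hwu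
      · exact Or.inl rfl
      · exfalso
        rcases eq_or_ne w v with rfl | hwv
        · simp [SimpleGraph.edist_self] at h
        · rw [SimpleGraph.edist_eq_one_iff_adj.mpr (hclique w hwC u hu hwu),
            SimpleGraph.edist_eq_one_iff_adj.mpr (hclique w hwC v hv hwv)] at h
          exact lt_irrefl _ h
    · have hwu : w ≠ u := fun e => hwC (e ▸ hu)
      have hwv : w ≠ v := fun e => hwC (e ▸ hv)
      have hadjuw : G.Adj u w := by
        by_contra hnadj
        have hne : G.edist w u ≠ ⊤ := ne_top_of_lt h
        obtain ⟨x, hx⟩ := my_exists_adj hwu hne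
        have hxC : x ∈ C := by
          by_contra hxC
          exact hindep w hwC x hxC hx
        have h2 : G.edist w v ≤ 2 := my_edist_le_two hclique hxC hv hx
        have h2' : 2 ≤ G.edist w u := my_two_le_edist hwu (fun a => hnadj a.symm)
        exact absurd h (not_lt.mpr (le_trans h2 h2'))
      refine Or.inr ⟨⟨hadjuw, hwC⟩, ?_⟩
      rintro ⟨hadjvw, -⟩
      have h1 : G.edist w v = 1 := SimpleGraph.edist_eq_one_iff_adj.mpr hadjvw.symm
      have : 1 ≤ G.edist w u := Order.one_le_iff_pos.mpr (SimpleGraph.edist_pos_of_ne hwu)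
      rw [h1] at h
      exact absurd h (not_lt.mpr this)
  · rintro (rfl | ⟨⟨hadj, hwC⟩, hnv⟩)
    · rw [SimpleGraph.edist_self, SimpleGraph.edist_eq_one_iff_adj.mpr (hclique _ hu v hv huv)]
      norm_num
    · have hnadjv : ¬ G.Adj w v := fun a => hnv ⟨a.symm, hwC⟩
      have hwv : w ≠ v := fun e => hwC (e ▸ hv)
      rw [SimpleGraph.edist_eq_one_iff_adj.mpr hadj.symm]
      exact lt_of_lt_of_le (by norm_num) (my_two_le_edist hwv hnadjv)

lemma cross_set (hclique : ∀ u ∈ C, ∀ v ∈ C, u ≠ v → G.Adj u v)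
    (hindep : ∀ u ∉ C, ∀ v ∉ C, ¬ G.Adj u v) {u v : V} (hu : u ∈ C) (hv : v ∉ C) (hadj : G.Adj u v) :
    {w : V | G.edist w v < G.edist w u} = {v} := by
  have hvu : v ≠ u := fun e => hv (e ▸ hu)
  ext w
  simp only [Set.mem_setOf_eq, Set.mem_singleton_iff]
  constructor
  · intro h
    by_contra hwv
    by_cases hwC : w ∈ C
    · have h1 : G.edist w u ≤ 1 := by
        rcases eq_or_ne w u with rfl | hwu
        · simp [SimpleGraph.edist_self]
        · exact le_of_eq (SimpleGraph.edist_eq_one_iff_adj.mpr (hclique w hwC u hu hwu))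
      have h2 : 1 ≤ G.edist w v := Order.one_le_iff_pos.mpr (SimpleGraph.edist_pos_of_ne hwv)
      exact absurd (lt_of_lt_of_le h h1) (not_lt.mpr h2)
    · have hne : G.edist w v ≠ ⊤ := ne_top_of_lt h
      obtain ⟨x, hx⟩ := my_exists_adj hwv hne
      have hxC : x ∈ C := by
        by_contra hxC
        exact hindep w hwC x hxC hx
      have h2 : G.edist w u ≤ 2 := my_edist_le_two hclique hxC hu hx
      have h2' : 2 ≤ G.edist w v := my_two_le_edist hwv (hindep w hwC v hv)
      exact absurd h (not_lt.mpr (le_trans h2 h2'))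
  · rintro rfl
    rw [SimpleGraph.edist_self, SimpleGraph.edist_eq_one_iff_adj.mpr hadj.symm]
    norm_num

lemma cross_subset (hclique : ∀ u ∈ C, ∀ v ∈ C, u ≠ v → G.Adj u v)
    (hindep : ∀ u ∉ C, ∀ v ∉ C, ¬ G.Adj u v) {u v : V} (hu : u ∈ C) (hv : v ∉ C) (hadj : G.Adj u v) :
    {w : V | G.edist w u < G.edist w v} ⊆
      ↑(univ \ insert v ((univ.filter fun w => G.Adj v w).erase u)) := by
  intro w h
  simp only [Set.mem_setOf_eq] at h
  rw [mem_coe, Finset.mem_sdiff]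
  refine ⟨mem_univ _, fun hmem => ?_⟩
  rcases Finset.mem_insert.mp hmem with rfl | hmem'
  · rw [SimpleGraph.edist_self, SimpleGraph.edist_eq_one_iff_adj.mpr hadj.symm] at h
    exact absurd h (by norm_num)
  · obtain ⟨hwu, hw2⟩ := Finset.mem_erase.mp hmem'
    have hadjvw : G.Adj v w := (Finset.mem_filter.mp hw2).2
    have hwC : w ∈ C := by
      by_contra hwC
      exact hindep v hv w hwC hadjvw
    rw [SimpleGraph.edist_eq_one_iff_adj.mpr (hclique w hwC u hu hwu),
      SimpleGraph.edist_eq_one_iff_adj.mpr hadjvw.symm] at h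
    exact lt_irrefl _ h

end aux

section aux2
variable {V : Type*} [Fintype V] [DecidableEq V] {G : SimpleGraph V} [DecidableRel G.Adj]
  {C : Finset V}

lemma clique_contrib (hclique : ∀ u ∈ C, ∀ v ∈ C, u ≠ v → G.Adj u v)
    (hindep : ∀ u ∉ C, ∀ v ∉ C, ¬ G.Adj u v) {u v : V}
    (hu : u ∈ C) (hv : v ∈ C) (huv : u ≠ v) :
    |(nG G u v : ℤ) - nG G v u| =
      |((univ.filter fun w => G.Adj u w ∧ w ∉ C).card : ℤ) -
        ((univ.filter fun w => G.Adj v w ∧ w ∉ C).card : ℤ)| := by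
  set Du := univ.filter fun w => G.Adj u w ∧ w ∉ C with hDu
  set Dv := univ.filter fun w => G.Adj v w ∧ w ∉ C with hDv
  have h1 : nG G u v = (Du \ Dv).card + 1 := by
    rw [nG, clique_set hclique hindep hu hv huv, Set.ncard_coe_finset,
      card_insert_of_notMem]
    intro hmem
    exact ((Finset.mem_filter.mp (Finset.mem_sdiff.mp hmem).1).2.2) hu
  have h2 : nG G v u = (Dv \ Du).card + 1 := by
    rw [nG, clique_set hclique hindep hv hu huv.symm, Set.ncard_coe_finset,
      card_insert_of_notMem]
    intro hmem
    exact ((Finset.mem_filter.mp (Finset.mem_sdiff.mp hmem).1).2.2) hv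
  have k1 : (Du \ Dv).card + (Du ∩ Dv).card = Du.card := card_sdiff_add_card_inter _ _
  have k2 : (Dv \ Du).card + (Dv ∩ Du).card = Dv.card := card_sdiff_add_card_inter _ _
  have k3 : Dv ∩ Du = Du ∩ Dv := inter_comm _ _
  rw [k3] at k2
  have : (nG G u v : ℤ) - nG G v u = (Du.card : ℤ) - Dv.card := by
    rw [h1, h2]; push_cast [← k1, ← k2]; ring
  rw [this]

lemma cross_contrib (hclique : ∀ u ∈ C, ∀ v ∈ C, u ≠ v → G.Adj u v)
    (hindep : ∀ u ∉ C, ∀ v ∉ C, ¬ G.Adj u v) {u v : V}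
    (hu : u ∈ C) (hv : v ∉ C) (hadj : G.Adj u v) :
    |(nG G u v : ℤ) - nG G v u| ≤
      (Fintype.card V : ℤ) - ((univ.filter fun w => G.Adj v w).card : ℤ) - 1 := by
  set Nv := univ.filter fun w => G.Adj v w with hNv
  have h1 : nG G v u = 1 := by
    rw [nG, cross_set hclique hindep hu hv hadj, Set.ncard_singleton]
  have h2 : nG G u v ≤ Fintype.card V - Nv.card := by
    have hle := Set.ncard_le_ncard (cross_subset hclique hindep hu hv hadj) (Set.toFinite _)
    rw [nG]
    rw [Set.ncard_coe_finset] at hle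
    refine le_trans hle ?_
    have hvNv : v ∉ Nv.erase u := by
      intro h
      exact G.irrefl (Finset.mem_filter.mp (Finset.mem_erase.mp h).2).2
    have huNv : u ∈ Nv := by simp [hNv, hadj.symm]
    have hcard : (insert v (Nv.erase u)).card = Nv.card := by
      rw [card_insert_of_notMem hvNv, card_erase_of_mem huNv]
      have : 1 ≤ Nv.card := card_pos.mpr ⟨u, huNv⟩
      omega
    rw [card_sdiff_of_subset (subset_univ _), card_univ, hcard]
  have h3 : 1 ≤ nG G u v := by
    rw [nG]
    rw [← Set.ncard_singleton u]
    apply Set.ncard_le_ncard _ (Set.toFinite _)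
    intro w hw
    rw [Set.mem_singleton_iff] at hw
    subst hw
    simp only [Set.mem_setOf_eq, SimpleGraph.edist_self,
      SimpleGraph.edist_eq_one_iff_adj.mpr hadj]
    norm_num
  have h4 : Nv.card ≤ Fintype.card V := le_trans (card_le_card (subset_univ _)) card_univ.le
  rw [h1]
  have h3' : (1:ℤ) ≤ (nG G u v : ℤ) := by exact_mod_cast h3
  rw [abs_of_nonneg (by push_cast; linarith)]
  omega

lemma sum_offDiag_image (C : Finset V) (fd : Sym2 V → ℤ) :
    ∑ p ∈ C.offDiag, fd (Sym2.mk.uncurry p) = 2 * ∑ e ∈ C.offDiag.image Sym2.mk.uncurry, fd e := by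
  rw [← Finset.sum_fiberwise_of_maps_to (g := Sym2.mk.uncurry) (fun x hx => Finset.mem_image_of_mem _ hx)]
  rw [Finset.mul_sum]
  apply Finset.sum_congr rfl
  intro e he
  obtain ⟨q, hq, rfl⟩ := Finset.mem_image.mp he
  have hfib : C.offDiag.filter (fun p => Sym2.mk.uncurry p = Sym2.mk.uncurry q) = {q, q.swap} := by
    ext p
    simp only [Finset.mem_filter, Finset.mem_insert, Finset.mem_singleton]
    constructor
    · rintro ⟨-, hp⟩
      exact Sym2.mk_eq_mk_iff.mp hp
    · rintro (rfl | rfl)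
      · exact ⟨hq, rfl⟩
      · refine ⟨?_, Sym2.mk_eq_mk_iff.mpr (Or.inr rfl)⟩
        rw [Finset.mem_offDiag] at hq ⊢
        exact ⟨hq.2.1, hq.1, fun h => hq.2.2 h.symm⟩
  rw [hfib]
  have hqs : q ≠ q.swap := by
    rw [Finset.mem_offDiag] at hq
    intro h
    exact hq.2.2 (congrArg Prod.fst h)
  rw [Finset.sum_insert (by simpa using hqs), Finset.sum_singleton,
    (by exact Sym2.mk_eq_mk_iff.mpr (Or.inr rfl) : Sym2.mk.uncurry q.swap = Sym2.mk.uncurry q) ]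
  ring

end aux2


/-- If `G` is a split graph of order `n` (a clique `C` of order `c`, an independent set
`I = Cᶜ` of order `n - c`, plus edges each joining `C` to `I`), then `Mo(G) ≤ (4/27)·n³`. -/
theorem mostar_split_le_univ {V : Type*} [Fintype V] [DecidableEq V] (G : SimpleGraph V)
    (n c : ℕ) (hn : Fintype.card V = n)
    (C : Finset V) (hC : C.card = c)
    (hclique : ∀ u ∈ C, ∀ v ∈ C, u ≠ v → G.Adj u v)
    (hindep : ∀ u ∉ C, ∀ v ∉ C, ¬ G.Adj u v) :
    (mostar G : ℝ) ≤ (4 / 27 : ℝ) * (n : ℝ) ^ 3 := by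
  haveI : DecidableRel G.Adj := Classical.decRel _
  subst hn
  subst hC
  set N := Fintype.card V with hN
  set f : Sym2 V → ℤ :=
    Sym2.lift ⟨fun u v => |(nG G u v : ℤ) - (nG G v u : ℤ)|, fun _ _ => abs_sub_comm _ _⟩ with hf
  set d : V → ℕ := fun u => (univ.filter fun w => G.Adj u w ∧ w ∉ C).card with hd
  set a : V → ℕ := fun v => (univ.filter fun w => G.Adj v w).card with ha
  set E1 := C.offDiag.image Sym2.mk.uncurry with hE1
  set Q := ((univ \ C) ×ˢ univ).filter (fun p : V × V => G.Adj p.1 p.2) with hQ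
  set E2 := Q.image Sym2.mk.uncurry with hE2
  have hQmem : ∀ p ∈ Q, p.1 ∉ C ∧ p.2 ∈ C ∧ G.Adj p.1 p.2 := by
    intro p hp
    obtain ⟨hmem, hadj⟩ := Finset.mem_filter.mp hp
    have h1 : p.1 ∉ C := (Finset.mem_sdiff.mp (Finset.mem_product.mp hmem).1).2
    refine ⟨h1, ?_, hadj⟩
    by_contra h2
    exact hindep p.1 h1 p.2 h2 hadj
  have hEq : (Set.toFinite G.edgeSet).toFinset = E1 ∪ E2 := by
    ext e
    induction e with
    | _ x y =>
      rw [Set.Finite.mem_toFinset, SimpleGraph.mem_edgeSet, Finset.mem_union]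
      constructor
      · intro hadj
        by_cases hx : x ∈ C
        · by_cases hy : y ∈ C
          · exact Or.inl (Finset.mem_image_of_mem _ (Finset.mem_offDiag.mpr ⟨hx, hy, hadj.ne⟩))
          · refine Or.inr (Finset.mem_image.mpr ⟨(y, x), ?_, Sym2.eq_swap⟩)
            exact Finset.mem_filter.mpr ⟨Finset.mem_product.mpr
              ⟨Finset.mem_sdiff.mpr ⟨mem_univ _, hy⟩, mem_univ _⟩, hadj.symm⟩
        · refine Or.inr (Finset.mem_image.mpr ⟨(x, y), ?_, rfl⟩)
          exact Finset.mem_filter.mpr ⟨Finset.mem_product.mpr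
            ⟨Finset.mem_sdiff.mpr ⟨mem_univ _, hx⟩, mem_univ _⟩, hadj⟩
      · rintro (h | h)
        · obtain ⟨⟨p1, p2⟩, hp, hpe⟩ := Finset.mem_image.mp h
          obtain ⟨h1, h2, h3⟩ := Finset.mem_offDiag.mp hp
          rcases Sym2.eq_iff.mp hpe with ⟨rfl, rfl⟩ | ⟨rfl, rfl⟩
          · exact hclique _ h1 _ h2 h3
          · exact (hclique _ h1 _ h2 h3).symm
        · obtain ⟨⟨p1, p2⟩, hp, hpe⟩ := Finset.mem_image.mp h
          have hadj := (hQmem _ hp).2.2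
          rcases Sym2.eq_iff.mp hpe with ⟨rfl, rfl⟩ | ⟨rfl, rfl⟩
          · exact hadj
          · exact hadj.symm
  have hdisj : Disjoint E1 E2 := by
    rw [Finset.disjoint_left]
    intro e he1 he2
    obtain ⟨⟨p1, p2⟩, hp, hpe⟩ := Finset.mem_image.mp he1
    obtain ⟨⟨q1, q2⟩, hq, hqe⟩ := Finset.mem_image.mp he2
    obtain ⟨hq1, hq2, -⟩ := hQmem _ hq
    obtain ⟨hp1, hp2, -⟩ := Finset.mem_offDiag.mp hp
    rw [← hqe] at hpe
    rcases Sym2.eq_iff.mp hpe with ⟨rfl, rfl⟩ | ⟨rfl, rfl⟩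
    · exact hq1 hp1
    · exact hq1 hp2
  have hmo : mostar G = ∑ e ∈ E1, f e + ∑ e ∈ E2, f e := by
    rw [mostar, ← hf, hEq, Finset.sum_union hdisj]
  have hS1 : 2 * ∑ e ∈ E1, f e = ∑ p ∈ C.offDiag, |((d p.1 : ℤ)) - (d p.2 : ℤ)| := by
    rw [hE1, ← sum_offDiag_image C f]
    apply Finset.sum_congr rfl
    intro p hp
    obtain ⟨x, y⟩ := p
    obtain ⟨hx, hy, hxy⟩ := Finset.mem_offDiag.mp hp
    rw [hf]
    simp only [Sym2.lift_mk]
    simp only [hd]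
    exact clique_contrib hclique hindep hx hy hxy
  have hinj : ∀ x ∈ Q, ∀ y ∈ Q, Sym2.mk.uncurry x = Sym2.mk.uncurry y → x = y := by
    intro p hp q hq h
    obtain ⟨hp1, -, -⟩ := hQmem p hp
    obtain ⟨-, hq2, -⟩ := hQmem q hq
    rcases Sym2.mk_eq_mk_iff.mp h with h | h
    · exact h
    · exfalso
      apply hp1
      rw [h]
      simpa using hq2
  have hS2 : ∑ e ∈ E2, f e = ∑ p ∈ Q, f (Sym2.mk.uncurry p) := by
    rw [hE2, Finset.sum_image hinj]
  have hS2le : ∑ p ∈ Q, f (Sym2.mk.uncurry p) ≤ ∑ p ∈ Q, ((N : ℤ) - (a p.1 : ℤ) - 1) := by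
    apply Finset.sum_le_sum
    intro p hp
    obtain ⟨hp1, hp2, hpadj⟩ := hQmem p hp
    obtain ⟨x, y⟩ := p
    rw [hf]
    simp only [Function.uncurry_apply_pair, Sym2.lift_mk]
    rw [abs_sub_comm]
    simp only [ha, hN]
    exact cross_contrib hclique hindep hp2 hp1 hpadj.symm
  have hQsum : ∑ p ∈ Q, ((N : ℤ) - (a p.1 : ℤ) - 1)
      = ∑ v ∈ univ \ C, (a v : ℤ) * ((N : ℤ) - (a v : ℤ) - 1) := by
    rw [hQ, Finset.sum_filter, Finset.sum_product]
    apply Finset.sum_congr rfl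
    intro v hv
    have hc : ∀ y ∈ (univ : Finset V).filter (fun w => G.Adj (v, w).1 (v, w).2),
        ((N : ℤ) - (a (v, y).1 : ℤ) - 1) = ((N : ℤ) - (a v : ℤ) - 1) := fun y _ => rfl
    rw [← Finset.sum_filter, Finset.sum_congr rfl hc, Finset.sum_const, nsmul_eq_mul]
  set A2 : ℤ := ∑ p ∈ C.offDiag, |((d p.1 : ℤ)) - (d p.2 : ℤ)| with hA2
  set B : ℤ := ∑ v ∈ univ \ C, (a v : ℤ) * ((N : ℤ) - (a v : ℤ) - 1) with hB
  have hkey : 2 * mostar G ≤ A2 + 2 * B := by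
    have h2 : ∑ e ∈ E2, f e ≤ B := le_of_le_of_eq (hS2.le.trans hS2le) hQsum
    rw [hmo]
    linarith [hS1, h2]
  set s : ℤ := ((univ \ C).card : ℤ) with hs
  set m : ℤ := ∑ v ∈ univ \ C, (a v : ℤ) with hm
  have hcle : C.card ≤ N := Finset.card_le_univ C
  have hsval : s = (N : ℤ) - (C.card : ℤ) := by
    rw [hs, Finset.card_univ_diff, Nat.cast_sub hcle]
  have hd_le : ∀ u : V, (d u : ℤ) ≤ s := by
    intro u
    rw [hs]
    have : (univ.filter fun w => G.Adj u w ∧ w ∉ C) ⊆ univ \ C := by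
      intro w hw
      exact Finset.mem_sdiff.mpr ⟨mem_univ _, (Finset.mem_filter.mp hw).2.2⟩
    exact_mod_cast Finset.card_le_card this
  have ha_le : ∀ v ∈ univ \ C, (a v : ℤ) ≤ (C.card : ℤ) := by
    intro v hv
    have hvC : v ∉ C := (Finset.mem_sdiff.mp hv).2
    have : (univ.filter fun w => G.Adj v w) ⊆ C := by
      intro w hw
      by_contra hwC
      exact hindep v hvC w hwC (Finset.mem_filter.mp hw).2
    exact_mod_cast Finset.card_le_card this
  have hmd : ∑ u ∈ C, (d u : ℤ) = m := by
    have step1 : ∀ u ∈ C, (d u : ℤ) = ∑ w ∈ univ \ C, (if G.Adj u w then (1 : ℤ) else 0) := by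
      intro u hu
      have he : (univ.filter fun w => G.Adj u w ∧ w ∉ C) = (univ \ C).filter (fun w => G.Adj u w) := by
        ext w
        simp only [Finset.mem_filter, Finset.mem_sdiff, mem_univ, true_and]
        tauto
      show ((univ.filter fun w => G.Adj u w ∧ w ∉ C).card : ℤ) = _
      rw [he, Finset.card_filter]
      push_cast
      rfl
    have step2 : ∀ v ∈ univ \ C, (a v : ℤ) = ∑ u ∈ C, (if G.Adj u v then (1 : ℤ) else 0) := by
      intro v hv
      have hvC : v ∉ C := (Finset.mem_sdiff.mp hv).2
      have he : (univ.filter fun w => G.Adj v w) = C.filter (fun u => G.Adj u v) := by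
        ext u
        simp only [Finset.mem_filter, mem_univ, true_and]
        constructor
        · intro hadj
          refine ⟨?_, hadj.symm⟩
          by_contra huC
          exact hindep v hvC u huC hadj
        · exact fun h => h.2.symm
      show ((univ.filter fun w => G.Adj v w).card : ℤ) = _
      rw [he, Finset.card_filter]
      push_cast
      rfl
    rw [Finset.sum_congr rfl step1, hm, Finset.sum_congr rfl step2, Finset.sum_comm]
  have hSd : ∑ u ∈ C, (d u : ℤ) ^ 2 ≤ s * m := by
    calc ∑ u ∈ C, (d u : ℤ) ^ 2 ≤ ∑ u ∈ C, s * (d u : ℤ) := by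
          apply Finset.sum_le_sum
          intro u hu
          rw [sq]
          exact mul_le_mul_of_nonneg_right (hd_le u) (Int.natCast_nonneg _)
      _ = s * m := by rw [← Finset.mul_sum, hmd]
  have hP1 : s * A2 ≤ 2 * s * (C.card : ℤ) * m - 2 * m ^ 2 := by
    have step : s * A2 ≤ ∑ p ∈ C.offDiag,
        (s * ((d p.1 : ℤ) + (d p.2 : ℤ)) - 2 * (d p.1 : ℤ) * (d p.2 : ℤ)) := by
      rw [hA2, Finset.mul_sum]
      apply Finset.sum_le_sum
      intro p hp
      have h1 := hd_le p.1
      have h2 := hd_le p.2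
      have n1 : (0 : ℤ) ≤ (d p.1 : ℤ) := Int.natCast_nonneg _
      have n2 : (0 : ℤ) ≤ (d p.2 : ℤ) := Int.natCast_nonneg _
      rcases le_total ((d p.1 : ℤ)) ((d p.2 : ℤ)) with h | h
      · rw [abs_of_nonpos (by linarith)]
        nlinarith
      · rw [abs_of_nonneg (by linarith)]
        nlinarith
    refine step.trans ?_
    have hsplitsum : ∑ p ∈ C.offDiag,
        (s * ((d p.1 : ℤ) + (d p.2 : ℤ)) - 2 * (d p.1 : ℤ) * (d p.2 : ℤ))
        = (∑ p ∈ C ×ˢ C, (s * ((d p.1 : ℤ) + (d p.2 : ℤ)) - 2 * (d p.1 : ℤ) * (d p.2 : ℤ)))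
          - ∑ x ∈ C, (s * ((d x : ℤ) + (d x : ℤ)) - 2 * (d x : ℤ) * (d x : ℤ)) := by
      rw [← Finset.diag_union_offDiag C,
        Finset.sum_union (Finset.disjoint_diag_offDiag C), Finset.sum_diag]
      ring
    have hprod : ∑ p ∈ C ×ˢ C, (s * ((d p.1 : ℤ) + (d p.2 : ℤ)) - 2 * (d p.1 : ℤ) * (d p.2 : ℤ))
        = 2 * s * (C.card : ℤ) * m - 2 * m ^ 2 := by
      rw [Finset.sum_product]
      have inner : ∀ x ∈ C, ∑ y ∈ C, (s * ((d x : ℤ) + (d y : ℤ)) - 2 * (d x : ℤ) * (d y : ℤ))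
          = s * (C.card : ℤ) * (d x : ℤ) + s * m - 2 * (d x : ℤ) * m := by
        intro x hx
        have hr : ∀ y ∈ C, s * ((d x : ℤ) + (d y : ℤ)) - 2 * (d x : ℤ) * (d y : ℤ)
            = s * (d x : ℤ) + (s - 2 * (d x : ℤ)) * (d y : ℤ) := fun y _ => by ring
        rw [Finset.sum_congr rfl hr, Finset.sum_add_distrib, Finset.sum_const,
          ← Finset.mul_sum, hmd, nsmul_eq_mul]
        ring
      rw [Finset.sum_congr rfl inner]
      have o1 : ∀ x ∈ C, s * (C.card : ℤ) * (d x : ℤ) + s * m - 2 * (d x : ℤ) * m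
          = s * m + (s * (C.card : ℤ) - 2 * m) * (d x : ℤ) := fun x _ => by ring
      rw [Finset.sum_congr rfl o1, Finset.sum_add_distrib, Finset.sum_const,
        ← Finset.mul_sum, hmd, nsmul_eq_mul]
      ring
    have hdiag : ∑ x ∈ C, (s * ((d x : ℤ) + (d x : ℤ)) - 2 * (d x : ℤ) * (d x : ℤ))
        = 2 * s * m - 2 * ∑ x ∈ C, (d x : ℤ) ^ 2 := by
      have hr : ∀ x ∈ C, s * ((d x : ℤ) + (d x : ℤ)) - 2 * (d x : ℤ) * (d x : ℤ)
          = (2 * s) * (d x : ℤ) - 2 * (d x : ℤ) ^ 2 := fun x _ => by ring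
      rw [Finset.sum_congr rfl hr, Finset.sum_sub_distrib, ← Finset.mul_sum,
        ← Finset.mul_sum, hmd]
    rw [hsplitsum, hprod, hdiag]
    have hm_nonneg : 0 ≤ m := by
      rw [hm]
      exact Finset.sum_nonneg fun v _ => Int.natCast_nonneg _
    have hs_nonneg : (0 : ℤ) ≤ s := Int.natCast_nonneg _
    nlinarith [hSd]
  have hP2 : s * B ≤ s * ((N : ℤ) - 1) * m - m ^ 2 := by
    have hBval : B = ((N : ℤ) - 1) * m - ∑ v ∈ univ \ C, (a v : ℤ) ^ 2 := by
      rw [hB, hm, Finset.mul_sum, ← Finset.sum_sub_distrib]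
      exact Finset.sum_congr rfl fun v _ => by ring
    have hCS : m ^ 2 ≤ s * ∑ v ∈ univ \ C, (a v : ℤ) ^ 2 := by
      rw [hm, hs]
      exact_mod_cast sq_sum_le_card_mul_sum_sq (s := univ \ C) (f := fun v => ((a v : ℤ)))
    have hs_nonneg : (0 : ℤ) ≤ s := Int.natCast_nonneg _
    calc s * B = s * (((N : ℤ) - 1) * m) - s * ∑ v ∈ univ \ C, (a v : ℤ) ^ 2 := by
          rw [hBval]; ring
      _ ≤ s * ((N : ℤ) - 1) * m - m ^ 2 := by linarith [hCS]
  have hm_nonneg : 0 ≤ m := by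
    rw [hm]
    exact Finset.sum_nonneg fun v _ => Int.natCast_nonneg _
  have hs_nonneg : (0 : ℤ) ≤ s := Int.natCast_nonneg _
  have hcomb : 8 * s * mostar G ≤ (s * ((C.card : ℤ) + (N : ℤ) - 1)) ^ 2 := by
    have h1 : s * (2 * mostar G) ≤ s * (A2 + 2 * B) := mul_le_mul_of_nonneg_left hkey hs_nonneg
    nlinarith [hP1, hP2, sq_nonneg (s * ((C.card : ℤ) + (N : ℤ) - 1) - 4 * m)]
  rcases eq_or_lt_of_le hs_nonneg with h0 | hpos
  · -- the case `C = univ`: no vertices outside the clique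
    have hcard0 : ((univ \ C).card : ℤ) = 0 := by rw [← hs]; exact h0.symm
    have hempty : univ \ C = ∅ := Finset.card_eq_zero.mp (by exact_mod_cast hcard0)
    have hB0 : B = 0 := by rw [hB, hempty, Finset.sum_empty]
    have hA20 : A2 = 0 := by
      rw [hA2]
      apply Finset.sum_eq_zero
      intro p hp
      have e1 : (d p.1 : ℤ) = 0 := le_antisymm (h0 ▸ hd_le p.1) (Int.natCast_nonneg _)
      have e2 : (d p.2 : ℤ) = 0 := le_antisymm (h0 ▸ hd_le p.2) (Int.natCast_nonneg _)
      rw [e1, e2]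
      simp
    have hMo : mostar G ≤ 0 := by linarith [hkey, hA20.le, hB0.le]
    have hMoR : (mostar G : ℝ) ≤ 0 := by exact_mod_cast Int.cast_nonpos.mpr hMo
    refine le_trans hMoR ?_
    positivity
  · set y : ℝ := (C.card : ℝ) + (N : ℝ) - 1 with hydef
    have hcombR : 8 * (s : ℝ) * (mostar G : ℝ) ≤ ((s : ℝ) * y) ^ 2 := by
      rw [hydef]
      exact_mod_cast hcomb
    have hs1R : (1 : ℝ) ≤ (s : ℝ) := by exact_mod_cast hpos
    have hsvalR : (s : ℝ) = (N : ℝ) - (C.card : ℝ) := by exact_mod_cast hsval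
    have hcR : (0 : ℝ) ≤ (C.card : ℝ) := Nat.cast_nonneg _
    have hNR : (1 : ℝ) ≤ (N : ℝ) := by linarith
    have hy : (0 : ℝ) ≤ y := by rw [hydef]; linarith
    have h2N : (s : ℝ) + y + 1 = 2 * (N : ℝ) := by rw [hydef, hsvalR]; ring
    have hkey3 : 27 * (s : ℝ) * y ^ 2 ≤ 4 * ((s : ℝ) + y + 1) ^ 3 := by
      nlinarith [mul_nonneg (sq_nonneg (2 * (s : ℝ) - y))
          (show (0 : ℝ) ≤ 2 * (s : ℝ) + 8 * y by linarith),
        mul_nonneg (show (0 : ℝ) ≤ (s : ℝ) by linarith) hy, sq_nonneg ((s : ℝ) + y),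
        sq_nonneg ((s : ℝ) - y), hy, hs1R]
    have hcube : 4 * ((s : ℝ) + y + 1) ^ 3 = 32 * (N : ℝ) ^ 3 := by rw [h2N]; ring
    have h27 : 27 * (s : ℝ) * y ^ 2 ≤ 32 * (N : ℝ) ^ 3 := by linarith
    have h8s : (0 : ℝ) < 8 * (s : ℝ) := by linarith
    have hMole : (mostar G : ℝ) ≤ (s : ℝ) * y ^ 2 / 8 := by
      have hr : 8 * (s : ℝ) * ((s : ℝ) * y ^ 2 / 8) = ((s : ℝ) * y) ^ 2 := by ring
      have h1 : 8 * (s : ℝ) * (mostar G : ℝ) ≤ 8 * (s : ℝ) * ((s : ℝ) * y ^ 2 / 8) := by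
        rw [hr]
        exact hcombR
      exact le_of_mul_le_mul_left h1 h8s
    clear_value A2 B s m y N
    calc (mostar G : ℝ) ≤ (s : ℝ) * y ^ 2 / 8 := hMole
      _ ≤ 4 / 27 * (N : ℝ) ^ 3 := by nlinarith [h27]
end
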